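/- Let R be a commutative ring in which 2 is invertible, let s ∈ R be invertible, and let f = s². Let A₁, A₂ be m × m matrices over R and let b₁, b₂ be vectors in R^m. Define the vectors M₁ := (A₁ + s·A₂)·(s·b₁ + b₂) and M₂ := (A₁ − s·A₂)·(s·b₁ − b₂). Then (M₁ + M₂)·(2s)⁻¹ = A₁·b₁ + A₂·b₂ and (M₁ + M₂)·2⁻¹ − M₂ = f·A₂·b₁ + A₁·b₂. In particular, if A is the block matrix [[A₁, A₂], [f·A₂, A₁]] and b = (b₁, b₂)ᵀ, then A·b = (c₁, c₂)ᵀ with c₁ = (M₁ + M₂)/(2s) and c₂ = (M₁ + M₂)/2 − M₂. -/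
import Mathlib


/-- Correctness of the two-multiplication scheme for a block matrix
`[[A₁, A₂], [f·A₂, A₁]]` with `f = s²`: with
`M₁ = (A₁ + s·A₂)·(s·b₁ + b₂)` and `M₂ = (A₁ - s·A₂)·(s·b₁ - b₂)` one has
`(M₁ + M₂)/(2s) = A₁·b₁ + A₂·b₂` and `(M₁ + M₂)/2 - M₂ = f·A₂·b₁ + A₁·b₂`,
so the block matrix-vector product is `(c₁, c₂)` with
`c₁ = (M₁ + M₂)/(2s)` and `c₂ = (M₁ + M₂)/2 - M₂`. -/
theorem two_mult_scheme {R : Type*} [CommRing R] (m : ℕ) (s : R)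
    [Invertible (2 : R)] [Invertible s]
    (A₁ A₂ : Matrix (Fin m) (Fin m) R) (b₁ b₂ : Fin m → R) :
    let M₁ := (A₁ + s • A₂).mulVec (s • b₁ + b₂)
    let M₂ := (A₁ - s • A₂).mulVec (s • b₁ - b₂)
    letI : Invertible (2 * s) := invertibleMul 2 s
    (⅟(2 * s)) • (M₁ + M₂) = A₁.mulVec b₁ + A₂.mulVec b₂ ∧
    (⅟(2 : R)) • (M₁ + M₂) - M₂ = (s ^ 2) • A₂.mulVec b₁ + A₁.mulVec b₂ ∧
    (Matrix.fromBlocks A₁ A₂ ((s ^ 2) • A₂) A₁).mulVec (Sum.elim b₁ b₂)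
      = Sum.elim ((⅟(2 * s)) • (M₁ + M₂)) ((⅟(2 : R)) • (M₁ + M₂) - M₂) := by
  intro M₁ M₂
  letI : Invertible (2 * s) := invertibleMul 2 s
  have hsum : M₁ + M₂ = (2 * s) • (A₁.mulVec b₁ + A₂.mulVec b₂) := by
    simp only [M₁, M₂, Matrix.add_mulVec, Matrix.sub_mulVec, Matrix.mulVec_add,
      Matrix.mulVec_sub, Matrix.smul_mulVec, Matrix.mulVec_smul]
    module
  have h1 : (⅟(2 * s)) • (M₁ + M₂) = A₁.mulVec b₁ + A₂.mulVec b₂ := by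
    rw [hsum, smul_smul, invOf_mul_self, one_smul]
  have h2 : (⅟(2 : R)) • (M₁ + M₂) - M₂ = (s ^ 2) • A₂.mulVec b₁ + A₁.mulVec b₂ := by
    rw [hsum]
    simp only [M₂, Matrix.sub_mulVec, Matrix.mulVec_sub, Matrix.smul_mulVec,
      Matrix.mulVec_smul, smul_smul, mul_comm (⅟(2:R)) (2*s)]
    rw [show (2 * s) * ⅟(2:R) = s by rw [mul_comm 2 s, mul_assoc, mul_invOf_self, mul_one]]
    module
  refine ⟨h1, h2, ?_⟩
  rw [Matrix.fromBlocks_mulVec]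
  rw [h1, h2]
  simp [Matrix.smul_mulVec]
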